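/- For a local biretraction α : H → A of a commutative Hopf algebroid H over A: (1) α(1_H) is an idempotent of A and the image α(H) equals the ideal A·α(1_H); (2) the element e^α appearing in axiom (BRT2) is idempotent; (3) e^α is unique. -/
import Mathlib


open TensorProduct

/-- The unital ideal `A·e` generated by an element `e` of a commutative ring. -/
def idealOf {A : Type*} [CommRing A] (e : A) : Set A := Set.range (fun a => a * e)

/-- A commutative Hopf algebroid over a commutative base algebra `A`:
a commutative algebra `H` with source and target maps `s, t : A → H`,
comultiplication `Δ`, counit `ε` and antipode `S` satisfying the standard axioms
(`S∘t = s`, `S∘s = t`, `S(h₍₁₎)h₍₂₎ = s(ε h)`, `h₍₁₎S(h₍₂₎) = t(ε h)`, etc.). -/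
structure CommHopfAlgebroid (k A H : Type*) [CommRing k] [CommRing A] [CommRing H]
    [Algebra k A] [Algebra k H] where
  s : A →ₐ[k] H
  t : A →ₐ[k] H
  comul : H →ₐ[k] H ⊗[k] H
  counit : H →ₐ[k] A
  antipode : H →ₐ[k] H
  coassoc :
    (TensorProduct.assoc k H H H).toLinearMap ∘ₗ
      (TensorProduct.map comul.toLinearMap LinearMap.id) ∘ₗ comul.toLinearMap
    = (TensorProduct.map LinearMap.id comul.toLinearMap) ∘ₗ comul.toLinearMap
  counit_left : (LinearMap.mul' k H) ∘ₗ
      (TensorProduct.map (t.toLinearMap ∘ₗ counit.toLinearMap) LinearMap.id) ∘ₗ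
        comul.toLinearMap = LinearMap.id
  counit_right : (LinearMap.mul' k H) ∘ₗ
      (TensorProduct.map LinearMap.id (s.toLinearMap ∘ₗ counit.toLinearMap)) ∘ₗ
        comul.toLinearMap = LinearMap.id
  counit_s : ∀ a : A, counit (s a) = a
  counit_t : ∀ a : A, counit (t a) = a
  antipode_s : ∀ a : A, antipode (s a) = t a
  antipode_t : ∀ a : A, antipode (t a) = s a
  comul_t : ∀ a : A, comul (t a) = t a ⊗ₜ[k] 1
  comul_s : ∀ a : A, comul (s a) = 1 ⊗ₜ[k] s a
  antipode_left : (LinearMap.mul' k H) ∘ₗ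
      (TensorProduct.map antipode.toLinearMap LinearMap.id) ∘ₗ comul.toLinearMap
    = s.toLinearMap ∘ₗ counit.toLinearMap
  antipode_right : (LinearMap.mul' k H) ∘ₗ
      (TensorProduct.map LinearMap.id antipode.toLinearMap) ∘ₗ comul.toLinearMap
    = t.toLinearMap ∘ₗ counit.toLinearMap

variable {k A H : Type*} [CommRing k] [CommRing A] [CommRing H] [Algebra k A] [Algebra k H]

/-- The convolution product of right `A`-linear maps `H → A`:
`(α ∗ β)(h) = β(t(α(h₍₁₎)) · h₍₂₎) = β(t(α(h₍₁₎))) · β(h₍₂₎)`. -/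
noncomputable def brtConv (D : CommHopfAlgebroid k A H) (α β : H →ₗ[k] A) : H →ₗ[k] A :=
  β ∘ₗ (LinearMap.mul' k H) ∘ₗ
    (TensorProduct.map (D.t.toLinearMap ∘ₗ α) LinearMap.id) ∘ₗ D.comul.toLinearMap

/-- `e` is a witness for axiom (BRT2) of a local biretraction `α`:
`α(t(e)) = α(1)` and `α∘t` restricts to a bijection `A·e → A·α(1)`. -/
def IsBrtWitness (D : CommHopfAlgebroid k A H) (α : H →ₗ[k] A) (e : A) : Prop :=
  α (D.t e) = α 1 ∧ Set.BijOn (fun a => α (D.t a)) (idealOf e) (idealOf (α 1))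

/-- A local biretraction of a commutative Hopf algebroid: a linear multiplicative
map `α : H → A` satisfying (BRT1) `α(s(a)) = a·α(1)` and (BRT2). -/
def IsBiretraction (D : CommHopfAlgebroid k A H) (α : H →ₗ[k] A) : Prop :=
  (∀ x y : H, α (x * y) = α x * α y) ∧ (∀ a : A, α (D.s a) = a * α 1) ∧
    ∃ e : A, IsBrtWitness D α e

/-- **Basic properties of local biretractions.** For a local biretraction `α` of a
commutative Hopf algebroid `H` over `A`: (1) `α(1)` is idempotent and the image of
`α` is the ideal `A·α(1)`; (2) any (BRT2)-witness `e^α` is idempotent; (3) the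
witness `e^α` is unique. -/
theorem biretraction_basic_properties (D : CommHopfAlgebroid k A H)
    (α : H →ₗ[k] A) (hα : IsBiretraction D α) :
    (α 1 * α 1 = α 1) ∧
    (Set.range α = idealOf (α 1)) ∧
    (∀ e : A, IsBrtWitness D α e → e * e = e) ∧
    (∀ e f : A, IsBrtWitness D α e → IsBrtWitness D α f → e = f) := by

  obtain ⟨hmul, hs, -⟩ := hα
  have h1 : α 1 * α 1 = α 1 := by rw [← hmul, one_mul]
  refine ⟨h1, ?_, ?_, ?_⟩
  · ext x
    constructor
    · rintro ⟨h, rfl⟩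
      exact ⟨α h, by show α h * α 1 = α h; rw [← hmul, mul_one]⟩
    · rintro ⟨a, rfl⟩
      exact ⟨D.s a, hs a⟩
  · rintro e ⟨he1, hbij⟩
    refine hbij.injOn ⟨e, rfl⟩ ⟨1, one_mul e⟩ ?_
    show α (D.t (e * e)) = α (D.t e)
    rw [map_mul, hmul, he1, h1]
  · rintro e f ⟨he1, hbe⟩ ⟨hf1, hbf⟩
    have key : α (D.t (e * f)) = α 1 := by
      rw [map_mul, hmul, he1, hf1, h1]
    have h2 : e * f = e := by
      refine hbe.injOn ⟨f, mul_comm f e⟩ ⟨1, one_mul e⟩ ?_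
      show α (D.t (e * f)) = α (D.t e)
      rw [key, he1]
    have h3 : e * f = f := by
      refine hbf.injOn ⟨e, rfl⟩ ⟨1, one_mul f⟩ ?_
      show α (D.t (e * f)) = α (D.t f)
      rw [key, hf1]
    rw [← h2, h3]
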